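/- LP^MLN programs 𝔽 and 𝔾 over 𝒫 are structurally equivalent if and only if for every interpretation X, the reducts ({𝔽̄}^ch)^X and ({𝔾̄}^ch)^X are classically equivalent, i.e., satisfied by exactly the same interpretations. -/

import Mathlib

namespace LPMLN

/-- Propositional formulas over a set of atoms `P`, built from atoms and `⊥`
using `∧`, `∨`, `→`. -/
inductive Formula (P : Type) : Type where
  | atom : P → Formula P
  | bot  : Formula P
  | and  : Formula P → Formula P → Formula P
  | or   : Formula P → Formula P → Formula P
  | imp  : Formula P → Formula P → Formula P
deriving DecidableEq

variable {P : Type} [DecidableEq P]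

/-- `¬F` abbreviates `F → ⊥`. -/
def Formula.neg (F : Formula P) : Formula P := .imp F .bot

/-- Classical evaluation of a formula in an interpretation `X ⊆ P`. -/
def Formula.eval (X : Finset P) : Formula P → Bool
  | .atom p => decide (p ∈ X)
  | .bot => false
  | .and F G => F.eval X && G.eval X
  | .or F G => F.eval X || G.eval X
  | .imp F G => !(F.eval X) || G.eval X

/-- Classical satisfaction `X ⊨ F`. -/
def Formula.sat (X : Finset P) (F : Formula P) : Prop := F.eval X = true

/-- The reduct `F^X`: every maximal subformula not satisfied by `X` is replaced by `⊥`. -/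
def Formula.reduct (X : Finset P) : Formula P → Formula P
  | .atom p => if p ∈ X then .atom p else .bot
  | .bot => .bot
  | .and F G => if (Formula.and F G).eval X then .and (F.reduct X) (G.reduct X) else .bot
  | .or F G => if (Formula.or F G).eval X then .or (F.reduct X) (G.reduct X) else .bot
  | .imp F G => if (Formula.imp F G).eval X then .imp (F.reduct X) (G.reduct X) else .bot

/-- `X` satisfies a (finite) set of formulas. -/
def satSet (X : Finset P) (Γ : Finset (Formula P)) : Prop := ∀ F ∈ Γ, F.sat X

/-- The reduct `Γ^X` of a finite set of formulas. -/
def reductSet (X : Finset P) (Γ : Finset (Formula P)) : Finset (Formula P) :=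
  Γ.image (Formula.reduct X)

/-- `X` is a stable model of `Γ` if `X ⊨ Γ^X` and no proper subset of `X` satisfies `Γ^X`. -/
def StableModel (Γ : Finset (Formula P)) (X : Finset P) : Prop :=
  satSet X (reductSet X Γ) ∧ ∀ Y, Y ⊂ X → ¬ satSet Y (reductSet X Γ)

/-- A weight is a real number (soft) or the symbol `α` (hard). -/
inductive Weight : Type where
  | soft : ℝ → Weight
  | hard : Weight

noncomputable instance : DecidableEq Weight := Classical.decEq _

/-- An LP^MLN program: a finite set of weighted formulas `w : R`. -/
abbrev Program (P : Type) [DecidableEq P] := Finset (Weight × Formula P)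

/-- `𝔽_X`: the weighted formulas of `𝔽` whose formula is satisfied by `X`. -/
noncomputable def progSat (𝔽 : Program P) (X : Finset P) : Program P :=
  𝔽.filter (fun r => r.2.eval X = true)

/-- `𝔽̄`: the formulas of `𝔽`, with weights dropped. -/
noncomputable def formulas (𝔽 : Program P) : Finset (Formula P) := 𝔽.image Prod.snd

/-- `X` is a soft stable model of `𝔽` (i.e. `X ∈ SM[𝔽]`) if `X` is a stable model of `𝔽̄_X`. -/
def SoftStable (𝔽 : Program P) (X : Finset P) : Prop :=
  StableModel (formulas (progSat 𝔽 X)) X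

/-- w-expressions: either zero or a formal expression `e^{c₁ + c₂·α}` with `c₁ : ℝ`, `c₂ : ℤ`. -/
inductive WExpr : Type where
  | zero : WExpr
  | exp : ℝ → ℤ → WExpr

/-- Multiplication of w-expressions: add exponents componentwise; zero is absorbing. -/
def WExpr.mul : WExpr → WExpr → WExpr
  | .zero, _ => .zero
  | _, .zero => .zero
  | .exp a b, .exp c d => .exp (a + c) (b + d)

/-- Inverse of a w-expression: negate both exponents. -/
def WExpr.inv : WExpr → WExpr
  | .zero => .zero
  | .exp a b => .exp (-a) (-b)

/-- Evaluation of a w-expression at a real number `a`. -/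
noncomputable def WExpr.eval (a : ℝ) : WExpr → ℝ
  | .zero => 0
  | .exp c₁ c₂ => Real.exp (c₁ + c₂ * a)

/-- The real contribution of a weight (hard rules contribute `0` to the soft sum). -/
def softWeight : Weight → ℝ
  | .soft r => r
  | .hard => 0

/-- Sum of the weights of the soft rules of `𝔽`. -/
noncomputable def softSum (𝔽 : Program P) : ℝ := ∑ r ∈ 𝔽, softWeight r.1

/-- The number of hard rules of `𝔽`. -/
noncomputable def hardCount (𝔽 : Program P) : ℤ :=
  ((𝔽.filter (fun r => r.1 = Weight.hard)).card : ℤ)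

/-- `TW(𝔽) = e^{c₁ + c₂·α}` where `c₁` is the sum of the soft weights and
`c₂` the number of hard rules. -/
noncomputable def TW (𝔽 : Program P) : WExpr := .exp (softSum 𝔽) (hardCount 𝔽)

open Classical in
/-- `W_𝔽(X) = TW(𝔽_X)` if `X ∈ SM[𝔽]`, and zero otherwise. -/
noncomputable def W (𝔽 : Program P) (X : Finset P) : WExpr :=
  if SoftStable 𝔽 X then TW (progSat 𝔽 X) else .zero

open Classical in
/-- `W^pnt_𝔽(X) = TW(𝔽 \ 𝔽_X)⁻¹` if `X ∈ SM[𝔽]`, and zero otherwise. -/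
noncomputable def Wpnt (𝔽 : Program P) (X : Finset P) : WExpr :=
  if SoftStable 𝔽 X then (TW (𝔽 \ progSat 𝔽 X)).inv else .zero

/-- `P_𝔽(X)`: the limit as `a → ∞` of the normalized evaluation of `W_𝔽(X)`. -/
noncomputable def Pr [Fintype P] (𝔽 : Program P) (X : Finset P) : ℝ :=
  Filter.limUnder Filter.atTop
    (fun a : ℝ => (W 𝔽 X).eval a / ∑ Y : Finset P, (W 𝔽 Y).eval a)

/-- `P^pnt_𝔽(X)`: the limit as `a → ∞` of the normalized evaluation of `W^pnt_𝔽(X)`. -/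
noncomputable def PrPnt [Fintype P] (𝔽 : Program P) (X : Finset P) : ℝ :=
  Filter.limUnder Filter.atTop
    (fun a : ℝ => (Wpnt 𝔽 X).eval a / ∑ Y : Finset P, (Wpnt 𝔽 Y).eval a)

/-- Weak equivalence: the same probability distribution. -/
def WeakEquiv [Fintype P] (𝔽 𝔾 : Program P) : Prop :=
  ∀ X : Finset P, Pr 𝔽 X = Pr 𝔾 X

/-- Strong equivalence of LP^MLN programs. -/
def StrongEquiv [Fintype P] (𝔽 𝔾 : Program P) : Prop :=
  ∀ (ℍ : Program P) (X : Finset P), Pr (𝔽 ∪ ℍ) X = Pr (𝔾 ∪ ℍ) X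

/-- Structural equivalence of LP^MLN programs. -/
def StructEquiv (𝔽 𝔾 : Program P) : Prop :=
  ∀ (ℍ : Program P) (X : Finset P), SoftStable (𝔽 ∪ ℍ) X ↔ SoftStable (𝔾 ∪ ℍ) X

/-- HT satisfaction `⟨Y,X⟩ ⊨ₕₜ F` (at the world "here"). -/
def htSat (Y X : Finset P) : Formula P → Prop
  | .atom p => p ∈ Y
  | .bot => False
  | .and F G => htSat Y X F ∧ htSat Y X G
  | .or F G => htSat Y X F ∨ htSat Y X G
  | .imp F G => (htSat Y X F → htSat Y X G) ∧ (Formula.imp F G).sat X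

/-- `⟨Y,X⟩` is an HT model of a set `Γ` of formulas. -/
def HTModel (Γ : Finset (Formula P)) (Y X : Finset P) : Prop :=
  Y ⊆ X ∧ ∀ F ∈ Γ, htSat Y X F

/-- `⟨Y,X⟩` is a soft HT model of an LP^MLN program `𝔽`. -/
def SoftHT (𝔽 : Program P) (Y X : Finset P) : Prop :=
  Y ⊆ X ∧ ∀ r ∈ progSat 𝔽 X, htSat Y X r.2

/-- The choice formula `{F}^ch = F ∨ ¬F`. -/
def Formula.ch (F : Formula P) : Formula P := .or F F.neg

/-- `{Γ}^ch`, choice formulas of a set of formulas. -/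
def chSet (Γ : Finset (Formula P)) : Finset (Formula P) := Γ.image Formula.ch

/-- Renaming of atoms. -/
def Formula.rename {Q : Type} (f : P → Q) : Formula P → Formula Q
  | .atom p => .atom (f p)
  | .bot => .bot
  | .and F G => .and (F.rename f) (G.rename f)
  | .or F G => .or (F.rename f) (G.rename f)
  | .imp F G => .imp (F.rename f) (G.rename f)

/-- `Δ_{𝒫'}(F)`, a formula over `𝒫 ∪ 𝒫'`; unprimed atoms are `Sum.inl p`,
primed atoms `p'` are `Sum.inr p`. -/
def Formula.delta : Formula P → Formula (P ⊕ P)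
  | .atom p => .atom (Sum.inr p)
  | .bot => .bot
  | .and F G => .and F.delta G.delta
  | .or F G => .or F.delta G.delta
  | .imp F G => .and (.imp F.delta G.delta)
      (.imp (F.rename Sum.inl) (G.rename Sum.inl))

/-- `Δ_{𝒫'}(Γ)` for a set of formulas. -/
def deltaSet (Γ : Finset (Formula P)) : Finset (Formula (P ⊕ P)) :=
  Γ.image Formula.delta

/-- The interpretation `Y' ∪ X` of `𝒫 ∪ 𝒫'`. -/
def primedInterp (Y X : Finset P) : Finset (P ⊕ P) :=
  X.image Sum.inl ∪ Y.image Sum.inr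


section Aux

/-- Evaluating the reduct at `X` itself agrees with evaluating the formula. -/
lemma eval_reduct_self (X : Finset P) (F : Formula P) :
    (F.reduct X).eval X = F.eval X := by
  induction F with
  | atom p => simp [Formula.reduct, Formula.eval]; split <;> simp_all [Formula.eval]
  | bot => simp [Formula.reduct]
  | and F G ihF ihG =>
      simp only [Formula.reduct]; split <;> simp_all [Formula.eval]
  | or F G ihF ihG =>
      simp only [Formula.reduct]; split <;> simp_all [Formula.eval]
  | imp F G ihF ihG =>
      simp only [Formula.reduct]; split <;> simp_all [Formula.eval]

/-- If `X ⊭ F` then `F^X = ⊥`. -/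
lemma reduct_eq_bot (X : Finset P) (F : Formula P) (h : F.eval X = false) :
    F.reduct X = .bot := by
  cases F with
  | atom p => simp_all [Formula.reduct, Formula.eval]
  | bot => simp [Formula.reduct]
  | and F G => simp_all [Formula.reduct]
  | or F G => simp_all [Formula.reduct]
  | imp F G => simp_all [Formula.reduct]

/-- Evaluation of a reduct only depends on membership of atoms of `X`. -/
lemma eval_reduct_congr (X Y Z : Finset P) (h : ∀ p ∈ X, (p ∈ Y ↔ p ∈ Z))
    (F : Formula P) : (F.reduct X).eval Y = (F.reduct X).eval Z := by
  induction F with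
  | atom p =>
      simp only [Formula.reduct]
      split
      · next hp => simp [Formula.eval, h p hp]
      · rfl
  | bot => rfl
  | and F G ihF ihG =>
      simp only [Formula.reduct]; split
      · simp [Formula.eval, ihF, ihG]
      · rfl
  | or F G ihF ihG =>
      simp only [Formula.reduct]; split
      · simp [Formula.eval, ihF, ihG]
      · rfl
  | imp F G ihF ihG =>
      simp only [Formula.reduct]; split
      · simp [Formula.eval, ihF, ihG]
      · rfl

/-- Satisfaction of the reduct of a choice formula. -/
lemma ch_reduct_sat (X Y : Finset P) (F : Formula P) :
    (F.ch.reduct X).eval Y = true ↔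
      (F.eval X = true → (F.reduct X).eval Y = true) := by
  have hch : (F.ch).eval X = true := by
    simp [Formula.ch, Formula.neg, Formula.eval]
  cases h : F.eval X with
  | true =>
      have hneg : (F.neg).reduct X = .bot := by
        apply reduct_eq_bot; simp [Formula.neg, Formula.eval, h]
      simp only [Formula.ch] at *
      simp [Formula.reduct, Formula.eval, hch, hneg, Formula.ch, h] at *
  | false =>
      have hF : F.reduct X = .bot := reduct_eq_bot X F h
      have hneg : (F.neg).eval X = true := by simp [Formula.neg, Formula.eval, h]
      simp only [Formula.ch] at *
      simp [Formula.reduct, Formula.eval, hch, hneg, Formula.neg, hF, h]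

/-- The key semantic predicate: `Z` satisfies the reduct (w.r.t. `X`) of every
formula of `𝔽` satisfied by `X`. -/
def Bsat (𝔽 : Program P) (X Z : Finset P) : Prop :=
  ∀ F ∈ formulas 𝔽, F.eval X = true → (F.reduct X).eval Z = true

lemma satSet_chSet_iff (𝔽 : Program P) (X Y : Finset P) :
    satSet Y (reductSet X (chSet (formulas 𝔽))) ↔ Bsat 𝔽 X Y := by
  unfold satSet reductSet chSet Bsat
  constructor
  · intro h F hF hX
    have := h (F.ch.reduct X) (by
      refine Finset.mem_image.2 ⟨F.ch, Finset.mem_image.2 ⟨F, hF, rfl⟩, rfl⟩)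
    exact (ch_reduct_sat X Y F).1 this hX
  · intro h G hG
    rcases Finset.mem_image.1 hG with ⟨G', hG', rfl⟩
    rcases Finset.mem_image.1 hG' with ⟨F, hF, rfl⟩
    exact (ch_reduct_sat X Y F).2 (h F hF)

lemma mem_formulas_progSat {𝔽 : Program P} {X : Finset P} {F : Formula P} :
    F ∈ formulas (progSat 𝔽 X) ↔ F ∈ formulas 𝔽 ∧ F.eval X = true := by
  unfold formulas progSat
  constructor
  · intro h
    rcases Finset.mem_image.1 h with ⟨r, hr, rfl⟩
    rcases Finset.mem_filter.1 hr with ⟨hr1, hr2⟩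
    exact ⟨Finset.mem_image.2 ⟨r, hr1, rfl⟩, hr2⟩
  · rintro ⟨h1, h2⟩
    rcases Finset.mem_image.1 h1 with ⟨r, hr, rfl⟩
    exact Finset.mem_image.2 ⟨r, Finset.mem_filter.2 ⟨hr, h2⟩, rfl⟩

lemma satSet_progSat_iff (𝔽 : Program P) (X Z : Finset P) :
    satSet Z (reductSet X (formulas (progSat 𝔽 X))) ↔ Bsat 𝔽 X Z := by
  unfold satSet reductSet Bsat
  constructor
  · intro h F hF hX
    exact h _ (Finset.mem_image.2 ⟨F, mem_formulas_progSat.2 ⟨hF, hX⟩, rfl⟩)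
  · intro h G hG
    rcases Finset.mem_image.1 hG with ⟨F, hF, rfl⟩
    rcases mem_formulas_progSat.1 hF with ⟨h1, h2⟩
    exact h F h1 h2

lemma Bsat_self (𝔽 : Program P) (X : Finset P) : Bsat 𝔽 X X := by
  intro F _ hX
  rw [eval_reduct_self]; exact hX

lemma softStable_iff (𝔽 : Program P) (X : Finset P) :
    SoftStable 𝔽 X ↔ ∀ Z, Z ⊂ X → ¬ Bsat 𝔽 X Z := by
  unfold SoftStable StableModel
  constructor
  · rintro ⟨_, h2⟩ Z hZ hB
    exact h2 Z hZ ((satSet_progSat_iff 𝔽 X Z).2 hB)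
  · intro h
    refine ⟨(satSet_progSat_iff 𝔽 X X).2 (Bsat_self 𝔽 X), fun Z hZ hs => ?_⟩
    exact h Z hZ ((satSet_progSat_iff 𝔽 X Z).1 hs)

lemma Bsat_union (𝔽 ℍ : Program P) (X Z : Finset P) :
    Bsat (𝔽 ∪ ℍ) X Z ↔ Bsat 𝔽 X Z ∧ Bsat ℍ X Z := by
  unfold Bsat formulas
  rw [Finset.image_union]
  constructor
  · intro h
    exact ⟨fun F hF => h F (Finset.mem_union_left _ hF),
      fun F hF => h F (Finset.mem_union_right _ hF)⟩
  · rintro ⟨h1, h2⟩ F hF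
    rcases Finset.mem_union.1 hF with h | h
    · exact h1 F h
    · exact h2 F h

lemma Bsat_inter (𝔽 : Program P) (X Y : Finset P) :
    Bsat 𝔽 X Y ↔ Bsat 𝔽 X (Y ∩ X) := by
  unfold Bsat
  have hc : ∀ F : Formula P, (F.reduct X).eval Y = (F.reduct X).eval (Y ∩ X) := by
    intro F
    exact eval_reduct_congr X Y (Y ∩ X) (fun p hp => by simp [Finset.mem_inter, hp]) F
  constructor <;> intro h F hF hX
  · rw [← hc F]; exact h F hF hX
  · rw [hc F]; exact h F hF hX

/-- The counterexample program used in the hard direction. -/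
noncomputable def counterProg (X Y : Finset P) : Program P :=
  Y.image (fun p => (Weight.hard, Formula.atom p)) ∪
    ((X \ Y) ×ˢ (X \ Y)).image
      (fun pq => (Weight.hard, Formula.imp (.atom pq.1) (.atom pq.2)))

lemma Bsat_counterProg (X Y Z : Finset P) (hYX : Y ⊆ X) :
    Bsat (counterProg X Y) X Z ↔
      (Y ⊆ Z ∧ ∀ p ∈ X \ Y, ∀ q ∈ X \ Y, p ∈ Z → q ∈ Z) := by
  unfold Bsat counterProg formulas
  constructor
  · intro h
    constructor
    · intro p hp
      have hmem : Formula.atom p ∈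
          ((Y.image (fun p => ((Weight.hard : Weight), Formula.atom p)) ∪
            ((X \ Y) ×ˢ (X \ Y)).image
              (fun pq => ((Weight.hard : Weight), Formula.imp (.atom pq.1) (.atom pq.2)))).image Prod.snd) := by
        refine Finset.mem_image.2 ⟨(Weight.hard, Formula.atom p), ?_, rfl⟩
        exact Finset.mem_union_left _ (Finset.mem_image.2 ⟨p, hp, rfl⟩)
      have hX : (Formula.atom p).eval X = true := by
        simp [Formula.eval, hYX hp]
      have := h _ hmem hX
      rw [eval_reduct_congr X Z Z (fun _ _ => Iff.rfl)] at this
      simpa [Formula.reduct, hYX hp, Formula.eval] using this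
    · intro p hp q hq hpZ
      have hpq : (p, q) ∈ (X \ Y) ×ˢ (X \ Y) := Finset.mem_product.2 ⟨hp, hq⟩
      have hmem : Formula.imp (.atom p) (.atom q) ∈
          ((Y.image (fun p => ((Weight.hard : Weight), Formula.atom p)) ∪
            ((X \ Y) ×ˢ (X \ Y)).image
              (fun pq => ((Weight.hard : Weight), Formula.imp (.atom pq.1) (.atom pq.2)))).image Prod.snd) := by
        refine Finset.mem_image.2 ⟨(Weight.hard, Formula.imp (.atom p) (.atom q)), ?_, rfl⟩
        exact Finset.mem_union_right _ (Finset.mem_image.2 ⟨(p, q), hpq, rfl⟩)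
      have hpX : p ∈ X := (Finset.mem_sdiff.1 hp).1
      have hqX : q ∈ X := (Finset.mem_sdiff.1 hq).1
      have hX : (Formula.imp (.atom p) (.atom q)).eval X = true := by
        simp [Formula.eval, hqX]
      have := h _ hmem hX
      simp [Formula.reduct, Formula.eval, hpX, hqX, hX] at this
      rcases this with h' | h'
      · exact absurd hpZ h'
      · exact h'
  · rintro ⟨h1, h2⟩ F hF hX
    rcases Finset.mem_image.1 hF with ⟨r, hr, rfl⟩
    rcases Finset.mem_union.1 hr with hr' | hr'
    · rcases Finset.mem_image.1 hr' with ⟨p, hp, rfl⟩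
      simp [Formula.reduct, hYX hp, Formula.eval, h1 hp]
    · rcases Finset.mem_image.1 hr' with ⟨pq, hpq, rfl⟩
      rcases Finset.mem_product.1 hpq with ⟨hp, hq⟩
      have hpX : pq.1 ∈ X := (Finset.mem_sdiff.1 hp).1
      have hqX : pq.2 ∈ X := (Finset.mem_sdiff.1 hq).1
      simp only [Formula.reduct, Formula.eval] at hX ⊢
      simp only [hX, ↓reduceIte]
      simp [Formula.reduct, Formula.eval, hpX, hqX]
      by_cases hpZ : pq.1 ∈ Z
      · exact Or.inr (h2 _ hp _ hq hpZ)
      · exact Or.inl hpZ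

lemma structEquiv_imp {𝔽 𝔾 : Program P} (hSE : StructEquiv 𝔽 𝔾)
    (X Y : Finset P) (hYX : Y ⊆ X) (hF : Bsat 𝔽 X Y) : Bsat 𝔾 X Y := by
  by_contra hG
  have hne : Y ≠ X := fun h => hG (h ▸ Bsat_self 𝔾 X)
  have hYX' : Y ⊂ X := lt_of_le_of_ne hYX hne
  set ℍ := counterProg X Y with hH
  have hBH : Bsat ℍ X Y := by
    rw [Bsat_counterProg X Y Y hYX]
    exact ⟨subset_rfl, fun p hp _ _ hpY =>
      absurd hpY (Finset.mem_sdiff.1 hp).2⟩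
  -- X is not a soft stable model of 𝔽 ∪ ℍ
  have hnotF : ¬ SoftStable (𝔽 ∪ ℍ) X := by
    rw [softStable_iff]
    intro h
    exact h Y hYX' ((Bsat_union 𝔽 ℍ X Y).2 ⟨hF, hBH⟩)
  -- X is a soft stable model of 𝔾 ∪ ℍ
  have hG' : SoftStable (𝔾 ∪ ℍ) X := by
    rw [softStable_iff]
    intro Z hZ hB
    rcases (Bsat_union 𝔾 ℍ X Z).1 hB with ⟨hBG, hBHZ⟩
    rcases (Bsat_counterProg X Y Z hYX).1 hBHZ with ⟨hYZ, himp⟩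
    by_cases hZY : Z = Y
    · exact hG (hZY ▸ hBG)
    · -- Z ≠ Y, Y ⊆ Z ⊊ X : so Z contains some element of X \ Y, hence Z = X
      have hZX : Z ⊆ X := hZ.subset
      have : ∃ p, p ∈ Z ∧ p ∈ X \ Y := by
        by_contra hc
        push_neg at hc
        apply hZY
        apply Finset.Subset.antisymm _ hYZ
        intro p hp
        have hpX : p ∈ X := hZX hp
        by_contra hpY
        exact hc p hp (Finset.mem_sdiff.2 ⟨hpX, hpY⟩)
      rcases this with ⟨p, hpZ, hpXY⟩
      have hXZ : X ⊆ Z := by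
        intro q hq
        by_cases hqY : q ∈ Y
        · exact hYZ hqY
        · exact himp p hpXY q (Finset.mem_sdiff.2 ⟨hq, hqY⟩) hpZ
      exact absurd (Finset.Subset.antisymm hZX hXZ) (Finset.ssubset_iff_subset_ne.1 hZ).2
  exact hnotF ((hSE ℍ X).2 hG')

end Aux

/-- structural equivalence iff for every `X` the reducts `({𝔽̄}^ch)^X` and
`({𝔾̄}^ch)^X` are classically equivalent. -/
theorem stmt10 {P : Type} [DecidableEq P] (𝔽 𝔾 : Program P) :
    StructEquiv 𝔽 𝔾 ↔
      ∀ X Y : Finset P,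
        satSet Y (reductSet X (chSet (formulas 𝔽))) ↔
        satSet Y (reductSet X (chSet (formulas 𝔾))) := by
  constructor
  · intro hSE X Y
    rw [satSet_chSet_iff, satSet_chSet_iff, Bsat_inter 𝔽, Bsat_inter 𝔾]
    have hsub : Y ∩ X ⊆ X := Finset.inter_subset_right
    have hSE' : StructEquiv 𝔾 𝔽 := fun ℍ Z => (hSE ℍ Z).symm
    exact ⟨structEquiv_imp hSE X (Y ∩ X) hsub, structEquiv_imp hSE' X (Y ∩ X) hsub⟩
  · intro h ℍ X
    rw [softStable_iff, softStable_iff]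
    have hB : ∀ Z, Bsat 𝔽 X Z ↔ Bsat 𝔾 X Z := by
      intro Z
      rw [← satSet_chSet_iff, ← satSet_chSet_iff]
      exact h X Z
    constructor <;> intro h1 Z hZ hB2 <;> apply h1 Z hZ <;>
      rcases (Bsat_union _ ℍ X Z).1 hB2 with ⟨hg, hh⟩
    · exact (Bsat_union _ ℍ X Z).2 ⟨(hB Z).2 hg, hh⟩
    · exact (Bsat_union _ ℍ X Z).2 ⟨(hB Z).1 hg, hh⟩

end LPMLN
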